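/- Let R be a Prüfer domain and let φ : E → H be an R-linear map between finitely generated projective R-modules. Then the image of φ is isomorphic, as an R-module, to a finite direct sum ⊕_{i=1}^r I_i of nonzero finitely generated ideals of R; in particular, the image of φ is a finitely generated projective R-module. -/

import Mathlib

open LinearMap Submodule

set_option synthInstance.maxHeartbeats 1000000
set_option maxHeartbeats 1000000

theorem aux_rep {R : Type*} [CommRing R] (I J : Ideal R) {x : R} (hx : x ∈ I * J) :
    ∃ (k : ℕ) (a b : Fin k → R), (∀ i, a i ∈ I) ∧ (∀ i, b i ∈ J) ∧
      (∑ i, a i * b i) = x := by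
  refine Submodule.mul_induction_on hx ?_ ?_
  · intro m hm n hn
    exact ⟨1, fun _ => m, fun _ => n, fun _ => hm, fun _ => hn, by simp⟩
  · rintro x y ⟨k₁, a₁, b₁, ha₁, hb₁, hs₁⟩ ⟨k₂, a₂, b₂, ha₂, hb₂, hs₂⟩
    refine ⟨k₁ + k₂, Fin.append a₁ a₂, Fin.append b₁ b₂, ?_, ?_, ?_⟩
    · intro i
      refine Fin.addCases (fun j => ?_) (fun j => ?_) i <;>
        simp [Fin.append_left, Fin.append_right, ha₁ _, ha₂ _]
    · intro i
      refine Fin.addCases (fun j => ?_) (fun j => ?_) i <;>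
        simp [Fin.append_left, Fin.append_right, hb₁ _, hb₂ _]
    · rw [Fin.sum_univ_add]
      simp [Fin.append_left, Fin.append_right, hs₁, hs₂]

theorem aux_proj {R : Type*} [CommRing R] [IsDomain R] {I J : Ideal R} {c : R}
    (hc : c ≠ 0) (hIJ : I * J = Ideal.span {c}) : Module.Projective R I := by
  have hcIJ : c ∈ I * J := by rw [hIJ]; exact Ideal.mem_span_singleton_self c
  obtain ⟨k, a, b, ha, hb, hs⟩ := aux_rep I J hcIJ
  -- for x ∈ I and each i, x * b i ∈ span {c}, so there's a unique coefficient
  have key : ∀ (x : I) (i : Fin k), ∃ r : R, r * c = (x : R) * b i := by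
    intro x i
    have : (x : R) * b i ∈ I * J := Ideal.mul_mem_mul x.2 (hb i)
    rw [hIJ] at this
    exact Ideal.mem_span_singleton'.mp this
  choose f hf using key
  have flin : ∀ (i : Fin k), IsLinearMap R (fun x : I => f x i) := by
    intro i
    constructor
    · intro x y
      apply mul_right_cancel₀ hc
      rw [add_mul, hf, hf, hf, Submodule.coe_add, add_mul]
    · intro r x
      apply mul_right_cancel₀ hc
      rw [smul_eq_mul, mul_assoc, hf, hf, Submodule.coe_smul, smul_eq_mul, mul_assoc]
  let σ : I →ₗ[R] (Fin k → R) := LinearMap.pi fun i => (flin i).mk' _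
  let π : (Fin k → R) →ₗ[R] I :=
    ∑ i, (LinearMap.toSpanSingleton R I ⟨a i, ha i⟩).comp (LinearMap.proj i)
  have hπσ : π.comp σ = LinearMap.id := by
    ext x
    have : c * ((π (σ x) : R)) = c * (x : R) := by
      simp only [π, σ, LinearMap.sum_apply, LinearMap.comp_apply, LinearMap.proj_apply,
        LinearMap.pi_apply, Submodule.coe_sum, Finset.mul_sum]
      calc ∑ i, c * ((LinearMap.toSpanSingleton R I ⟨a i, ha i⟩) ((flin i).mk' _ x) : R)
          = ∑ i, (x : R) * b i * a i := by
            refine Finset.sum_congr rfl fun i _ => ?_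
            simp only [LinearMap.toSpanSingleton_apply, SetLike.mk_smul_mk, smul_eq_mul,
              IsLinearMap.mk'_apply]
            rw [mul_comm c, mul_comm (f x i), mul_assoc, hf]; ring
        _ = (x : R) * ∑ i, a i * b i := by
            rw [Finset.mul_sum]; exact Finset.sum_congr rfl fun i _ => by ring
        _ = c * (x : R) := by rw [hs]; ring
    have := mul_left_cancel₀ hc this
    simpa using this
  exact Module.Projective.of_split σ π hπσ

/-- Peeling off the first coordinate of a dependent pi type, as a linear equivalence. -/
def auxConsEquiv {R : Type*} [Semiring R] {r : ℕ} (α : Fin (r + 1) → Type*)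
    [∀ i, AddCommMonoid (α i)] [∀ i, Module R (α i)] :
    (∀ i, α i) ≃ₗ[R] α 0 × ∀ j : Fin r, α j.succ where
  toFun f := (f 0, fun j => f j.succ)
  invFun x := Fin.cons x.1 x.2
  map_add' f g := rfl
  map_smul' c f := rfl
  left_inv f := Fin.cons_self_tail f
  right_inv x := by simp


theorem aux_main {R : Type*} [CommRing R] [IsDomain R]
    (hpruf : ∀ I : Ideal R, I.FG → I ≠ ⊥ →
      ∃ (J : Ideal R) (c : R), J.FG ∧ c ≠ 0 ∧ I * J = Ideal.span {c}) :
    ∀ (n : ℕ) (M : Submodule R (Fin n → R)), M.FG →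
      ∃ (r : ℕ) (I : Fin r → Ideal R), (∀ i, (I i).FG ∧ I i ≠ ⊥) ∧
        Nonempty ((↥M) ≃ₗ[R] ((i : Fin r) → ↥(I i))) := by
  intro n
  induction n with
  | zero =>
    intro M _
    refine ⟨0, Fin.elim0, fun i => i.elim0, ⟨?_⟩⟩
    have h1 : Subsingleton (↥M) := by
      constructor; intro a b; ext i; exact i.elim0
    exact
      { toFun := fun _ => 0
        invFun := fun _ => 0
        map_add' := fun _ _ => by simp
        map_smul' := fun _ _ => by simp
        left_inv := fun x => Subsingleton.elim _ _
        right_inv := fun x => funext fun i => i.elim0 }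
  | succ n ih =>
    intro M hM
    haveI : Module.Finite R ↥M := Module.Finite.iff_fg.mpr hM
    set p : ↥M →ₗ[R] R := (LinearMap.proj (Fin.last n)).comp M.subtype with hp
    set I₀ : Ideal R := LinearMap.range p with hI₀
    by_cases hbot : I₀ = ⊥
    · -- all elements of M have last coordinate 0
      have hlast : ∀ x : ↥M, (x : Fin (n + 1) → R) (Fin.last n) = 0 := by
        intro x
        have : p x ∈ I₀ := ⟨x, rfl⟩
        rw [hbot] at this
        simpa [hp] using this
      set g : ↥M →ₗ[R] (Fin n → R) :=
        (LinearMap.funLeft R R Fin.castSucc).comp M.subtype with hg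
      have hginj : Function.Injective g := by
        intro x y hxy
        ext j
        refine Fin.lastCases ?_ (fun j => ?_) j
        · rw [hlast x, hlast y]
        · exact congrFun hxy j
      have hN : (LinearMap.range g).FG := by
        haveI : Module.Finite R ↥(LinearMap.range g) := Module.Finite.range g
        exact Module.Finite.iff_fg.mp this
      obtain ⟨r, Is, hIs, ⟨e⟩⟩ := ih (LinearMap.range g) hN
      exact ⟨r, Is, hIs, ⟨(LinearEquiv.ofInjective g hginj).trans e⟩⟩
    · -- I₀ is a nonzero finitely generated ideal
      have hI₀fg : I₀.FG := by
        haveI : Module.Finite R ↥I₀ := Module.Finite.range p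
        exact Module.Finite.iff_fg.mp this
      obtain ⟨J, c, _, hc, hIJ⟩ := hpruf I₀ hI₀fg hbot
      haveI : Module.Projective R ↥I₀ := aux_proj hc hIJ
      set q : ↥M →ₗ[R] ↥I₀ := p.rangeRestrict with hq
      have hqsurj : Function.Surjective q := p.surjective_rangeRestrict
      obtain ⟨l, hl⟩ := Module.projective_lifting_property q LinearMap.id hqsurj
      -- split: M ≃ ker q × I₀
      have hexact : Function.Exact (LinearMap.ker q).subtype q :=
        LinearMap.exact_subtype_ker_map q
      have e1full := (@Function.Exact.splitSurjectiveEquiv R ↥(LinearMap.ker q) ↥M ↥I₀ _ _ _ _ _ _ _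
          (LinearMap.ker q).subtype q hexact (Submodule.injective_subtype (LinearMap.ker q))) (⟨l, hl⟩ : {l : ↥I₀ →ₗ[R] ↥M // q ∘ₗ l = LinearMap.id})
      obtain ⟨e1, -⟩ := e1full
      -- ker q is finitely generated (it is a direct summand of M)
      haveI : Module.Finite R ↥(LinearMap.ker q) :=
        Module.Finite.of_surjective ((LinearMap.fst R _ _).comp e1.toLinearMap)
          ((Prod.fst_surjective).comp e1.surjective)
      -- embed ker q into Fin n → R
      set g : ↥(LinearMap.ker q) →ₗ[R] (Fin n → R) :=
        (LinearMap.funLeft R R Fin.castSucc).comp (M.subtype.comp (LinearMap.ker q).subtype)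
        with hg
      have hginj : Function.Injective g := by
        intro x y hxy
        have hlast : ∀ z : ↥(LinearMap.ker q),
            ((z : ↥M) : Fin (n + 1) → R) (Fin.last n) = 0 := by
          intro z
          have h0 : p z.1 = ((q z.1 : ↥I₀) : R) := rfl
          rw [show q z.1 = 0 from z.2] at h0
          simp only [ZeroMemClass.coe_zero] at h0
          simpa [hp] using h0
        apply Subtype.ext; apply Subtype.ext
        funext j
        refine Fin.lastCases ?_ (fun j => ?_) j
        · rw [hlast x, hlast y]
        · exact congrFun hxy j
      have hN : (LinearMap.range g).FG := by
        haveI : Module.Finite R ↥(LinearMap.range g) := Module.Finite.range g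
        exact Module.Finite.iff_fg.mp this
      obtain ⟨r, Is, hIs, ⟨e2⟩⟩ := ih (LinearMap.range g) hN
      set Icons : Fin (r + 1) → Ideal R := Fin.cons I₀ Is with hIcons
      refine ⟨r + 1, Icons, ?_, ⟨?_⟩⟩
      · intro i
        refine Fin.cases ?_ (fun j => ?_) i
        · simpa [hIcons] using ⟨hI₀fg, hbot⟩
        · simpa [hIcons] using hIs j
      · have eker : ↥(LinearMap.ker q) ≃ₗ[R] ((i : Fin r) → ↥(Is i)) :=
          (LinearEquiv.ofInjective g hginj).trans e2
        have eA := (LinearEquiv.prodComm R ↥(LinearMap.ker q) ↥I₀).trans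
            (LinearEquiv.prodCongr (LinearEquiv.refl R ↥I₀) eker)
        have eB1 : (↥I₀ × ((i : Fin r) → ↥(Is i))) ≃ₗ[R]
            (↥(Icons 0) × ((j : Fin r) → ↥(Icons j.succ))) :=
          LinearEquiv.prodCongr
            (LinearEquiv.ofEq I₀ (Icons 0) (by simp [hIcons]))
            (LinearEquiv.piCongrRight fun j =>
              LinearEquiv.ofEq (Is j) (Icons j.succ) (by simp [hIcons]))
        have eB2 := (auxConsEquiv (R := R) (fun i => ↥(Icons i))).symm
        exact e1.trans (eA.trans (eB1.trans eB2))


/-- Over a Prüfer domain, the image of a linear map between finitely generated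
projective modules is isomorphic to a finite direct sum of nonzero finitely generated
ideals; in particular it is finitely generated projective. -/
theorem stmt_7 {R : Type*} [CommRing R] [IsDomain R]
    (hpruf : ∀ I : Ideal R, I.FG → I ≠ ⊥ →
      ∃ (J : Ideal R) (c : R), J.FG ∧ c ≠ 0 ∧ I * J = Ideal.span {c})
    {E H : Type*} [AddCommGroup E] [Module R E] [AddCommGroup H] [Module R H]
    [Module.Finite R E] [Module.Projective R E]
    [Module.Finite R H] [Module.Projective R H]
    (φ : E →ₗ[R] H) :
    (∃ (r : ℕ) (I : Fin r → Ideal R),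
      (∀ i, (I i).FG ∧ I i ≠ ⊥) ∧
      Nonempty (↥(LinearMap.range φ) ≃ₗ[R] ((i : Fin r) → ↥(I i)))) ∧
    Module.Finite R ↥(LinearMap.range φ) ∧
    Module.Projective R ↥(LinearMap.range φ) := by
  obtain ⟨n, f, g, hf, hg, hfg⟩ := Module.Finite.exists_comp_eq_id_of_projective R H
  -- move the range of φ into the free module Fin n → R
  have e0 : ↥(LinearMap.range φ) ≃ₗ[R] ↥((LinearMap.range φ).map g) :=
    Submodule.equivMapOfInjective g hg _
  have hNfg : ((LinearMap.range φ).map g).FG := by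
    haveI : Module.Finite R ↥(LinearMap.range φ) := Module.Finite.range φ
    haveI : Module.Finite R ↥((LinearMap.range φ).map g) :=
      Module.Finite.equiv e0
    exact Module.Finite.iff_fg.mp this
  obtain ⟨r, I, hI, ⟨e⟩⟩ := aux_main hpruf n ((LinearMap.range φ).map g) hNfg
  have etot : ↥(LinearMap.range φ) ≃ₗ[R] ((i : Fin r) → ↥(I i)) := e0.trans e
  refine ⟨⟨r, I, hI, ⟨etot⟩⟩, ?_, ?_⟩
  · exact Module.Finite.range φ
  · -- each ideal is projective, hence so is the finite product, hence the range
    haveI : ∀ i, Module.Projective R ↥(I i) := by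
      intro i
      obtain ⟨J, c, _, hc, hIJ⟩ := hpruf (I i) (hI i).1 (hI i).2
      exact aux_proj hc hIJ
    haveI : Module.Projective R ((i : Fin r) → ↥(I i)) := by
      haveI : Module.Projective R (DirectSum (Fin r) fun i => ↥(I i)) :=
        inferInstanceAs (Module.Projective R (DFinsupp fun i : Fin r => ↥(I i)))
      exact Module.Projective.of_equiv
        (DirectSum.linearEquivFunOnFintype R (Fin r) (fun i => ↥(I i)))
    exact Module.Projective.of_equiv etot.symm
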